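/- Let H be a bipartite graph with t vertices whose minimal vertex cover has size q, let V_1,…,V_t be a partition of {1,…,n}, and let R' be the matrix with R'(A,B) = R_H(A,B) whenever A ∩ B = ∅, a_i ∈ V_i for all i, and b_j ∈ V_{x+j} for all j, and R'(A,B) = 0 otherwise. For every integer k ≥ 1, the number of sequences (A_1, B_2, A_3, …, A_{2k−1}, B_{2k}), with each A an x-element subset and each B a y-element subset of {1,…,n} and A_{2k+1} := A_1, such that E[∏_{j=1}^{k} R'(A_{2j−1}, B_{2j})·R'(A_{2j+1}, B_{2j})] ≠ 0, is at most (tk)^{2(k−1)q}·n^{(t−q)k+q}. -/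

import Mathlib

def sgn (b : Bool) : ℝ := if b then 1 else -1

noncomputable def Pr {n : ℕ} (P : (Sym2 (Fin n) → Bool) → Prop) : ℝ := by
  classical
  exact ((Finset.univ.filter P).card : ℝ) / (Fintype.card (Sym2 (Fin n) → Bool))

noncomputable def Ex {n : ℕ} (f : (Sym2 (Fin n) → Bool) → ℝ) : ℝ :=
  (∑ g : Sym2 (Fin n) → Bool, f g) / (Fintype.card (Sym2 (Fin n) → Bool))

noncomputable def Rmat {n : ℕ} (g : Sym2 (Fin n) → Bool) : Matrix (Fin n) (Fin n) ℝ :=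
  Matrix.of fun i j => if i = j then 0 else sgn (g s(i, j))

def cyc {m : ℕ} (j : Fin m) : Fin m := ⟨((j : ℕ) + 1) % m, Nat.mod_lt _ j.pos⟩

abbrev SubsetsCard (n x : ℕ) := {A : Finset (Fin n) // A.card = x}

def tup {n x : ℕ} (A : SubsetsCard n x) (i : Fin x) : Fin n :=
  (A.1.orderIsoOfFin A.2 i : Fin n)

noncomputable def RH {n x y : ℕ} (E : Finset (Fin x × Fin y)) (g : Sym2 (Fin n) → Bool) :
    Matrix (SubsetsCard n x) (SubsetsCard n y) ℝ :=
  Matrix.of fun A B =>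
    if Disjoint A.1 B.1 then ∏ e ∈ E, sgn (g s(tup A e.1, tup B e.2)) else 0

def IsVertexCover {x y : ℕ} (E : Finset (Fin x × Fin y)) (S : Finset (Fin x ⊕ Fin y)) : Prop :=
  ∀ e ∈ E, Sum.inl e.1 ∈ S ∨ Sum.inr e.2 ∈ S

noncomputable def RHpart {n x y : ℕ} (E : Finset (Fin x × Fin y))
    (P : (Fin x ⊕ Fin y) → Finset (Fin n)) (g : Sym2 (Fin n) → Bool) :
    Matrix (SubsetsCard n x) (SubsetsCard n y) ℝ :=
  Matrix.of fun A B =>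
    if Disjoint A.1 B.1 ∧ (∀ i, tup A i ∈ P (Sum.inl i)) ∧ (∀ j, tup B j ∈ P (Sum.inr j))
    then RH E g A B else 0


lemma tup_mem {n x : ℕ} (A : SubsetsCard n x) (i : Fin x) : tup A i ∈ A.1 :=
  (A.1.orderIsoOfFin A.2 i).2

lemma tup_image {n x : ℕ} (A : SubsetsCard n x) :
    Finset.image (tup A) Finset.univ = A.1 := by
  apply Finset.Subset.antisymm
  · intro a ha
    simp only [Finset.mem_image] at ha
    obtain ⟨i, -, rfl⟩ := ha
    exact tup_mem A i
  · intro a ha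
    simp only [Finset.mem_image]
    exact ⟨(A.1.orderIsoOfFin A.2).symm ⟨a, ha⟩, Finset.mem_univ _,
      by simp [tup]⟩

lemma sgn_not (b : Bool) : sgn (!b) = - sgn b := by cases b <;> simp [sgn]

/-- Parity lemma: nonzero sum over all sign assignments forces even multiplicities. -/
lemma parity_of_sum_ne {n : ℕ} {ι : Type*} [DecidableEq ι] (F : Finset ι)
    (e : ι → Sym2 (Fin n))
    (h : (∑ g : Sym2 (Fin n) → Bool, ∏ i ∈ F, sgn (g (e i))) ≠ 0)
    (s : Sym2 (Fin n)) : Even (F.filter fun i => e i = s).card := by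
  classical
  by_contra hodd
  apply h
  have key : ∀ g : Sym2 (Fin n) → Bool,
      (∏ i ∈ F, sgn ((fun t => if t = s then !(g t) else g t) (e i)))
        = - ∏ i ∈ F, sgn (g (e i)) := by
    intro g
    rw [← Finset.prod_filter_mul_prod_filter_not F (fun i => e i = s),
      ← Finset.prod_filter_mul_prod_filter_not F (fun i => e i = s)
        (fun i => sgn (g (e i)))]
    have h1 : (∏ i ∈ F.filter fun i => e i = s,
        sgn (if e i = s then !(g (e i)) else g (e i)))
        = (-1) ^ (F.filter fun i => e i = s).card *
          ∏ i ∈ F.filter fun i => e i = s, sgn (g (e i)) := by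
      rw [← Finset.prod_const, ← Finset.prod_mul_distrib]
      apply Finset.prod_congr rfl
      intro i hi
      rw [Finset.mem_filter] at hi
      rw [if_pos hi.2, sgn_not]; ring
    have h2 : (∏ i ∈ F.filter fun i => ¬ e i = s,
        sgn (if e i = s then !(g (e i)) else g (e i)))
        = ∏ i ∈ F.filter fun i => ¬ e i = s, sgn (g (e i)) := by
      apply Finset.prod_congr rfl
      intro i hi
      rw [Finset.mem_filter] at hi
      rw [if_neg hi.2]
    simp only [h1, h2]
    rw [(Nat.not_even_iff_odd.1 hodd).neg_one_pow]
    ring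
  have hb : Function.Involutive (fun (g : Sym2 (Fin n) → Bool) =>
      (fun t => if t = s then !(g t) else g t)) := by
    intro g; funext t; by_cases ht : t = s <;> simp [ht]
  have h2 : (∑ g : Sym2 (Fin n) → Bool, ∏ i ∈ F, sgn (g (e i)))
      = - ∑ g : Sym2 (Fin n) → Bool, ∏ i ∈ F, sgn (g (e i)) := by
    calc (∑ g : Sym2 (Fin n) → Bool, ∏ i ∈ F, sgn (g (e i)))
        = ∑ g : Sym2 (Fin n) → Bool,
            ∏ i ∈ F, sgn ((fun t => if t = s then !(g t) else g t) (e i)) := by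
          exact (Fintype.sum_bijective _ hb.bijective _ _ (fun g => rfl)).symm
      _ = ∑ g : Sym2 (Fin n) → Bool, - ∏ i ∈ F, sgn (g (e i)) := by
          exact Finset.sum_congr rfl fun g _ => key g
      _ = - ∑ g : Sym2 (Fin n) → Bool, ∏ i ∈ F, sgn (g (e i)) := by
          rw [Finset.sum_neg_distrib]
  linarith

/-- regroup a product over `range (2*k)` into consecutive pairs -/
lemma prod_range_two_mul {M : Type*} [CommMonoid M] (k : ℕ) (f : ℕ → M) :
    ∏ m ∈ Finset.range (2 * k), f m
      = ∏ j ∈ Finset.range k, (f (2 * j) * f (2 * j + 1)) := by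
  induction k with
  | zero => simp
  | succ k ih =>
      rw [Nat.mul_succ, Finset.prod_range_succ, Finset.prod_range_succ,
        Finset.prod_range_succ, ← ih]
      rw [mul_assoc]


def uN {n k : ℕ} (hk : 0 < k) (u : Fin k → Fin n) (j : ℕ) : Fin n :=
  u ⟨j % k, Nat.mod_lt _ hk⟩

def wv {n k : ℕ} (hk : 0 < k) (u w : Fin k → Fin n) (m : ℕ) : Fin n :=
  if 2 ∣ m then uN hk u (m / 2) else uN hk w (m / 2)

def pe {n k : ℕ} (hk : 0 < k) (u w : Fin k → Fin n) (m : ℕ) : Fin n × Fin n :=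
  if 2 ∣ m then (uN hk u (m / 2), uN hk w (m / 2))
  else (uN hk u (m / 2 + 1), uN hk w (m / 2))

lemma pe_comp {n k : ℕ} (hk : 0 < k) (u w : Fin k → Fin n) (m : ℕ) :
    pe hk u w m = (wv hk u w m, wv hk u w (m + 1))
      ∨ pe hk u w m = (wv hk u w (m + 1), wv hk u w m) := by
  rcases Nat.even_or_odd m with he | ho
  · left
    obtain ⟨c, rfl⟩ := he
    have h2 : ¬ (2 ∣ (c + c + 1)) := by omega
    have hd : (2 : ℕ) ∣ (c + c) := by omega
    have h3 : (c + c + 1) / 2 = (c + c) / 2 := by omega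
    simp [pe, wv, hd, h2, h3]
  · right
    obtain ⟨c, rfl⟩ := ho
    have h2 : (2 : ℕ) ∣ (2*c + 1 + 1) := by omega
    have hd : ¬ ((2:ℕ) ∣ 2*c + 1) := by omega
    have h3 : (2*c + 1 + 1) / 2 = (2*c+1) / 2 + 1 := by omega
    simp [pe, wv, hd, h2, h3]

lemma walk_step {n k : ℕ} (hk : 0 < k) (u w : Fin k → Fin n) (i : ℕ) :
    ((Finset.range (i+1)).image (wv hk u w)).card
      ≤ ((Finset.range i).image (pe hk u w)).card + 1 := by
  classical
  induction i with
  | zero => simp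
  | succ i ih =>
      rw [Finset.range_add_one, Finset.image_insert]
      by_cases hv : wv hk u w (i+1) ∈ (Finset.range (i+1)).image (wv hk u w)
      · rw [Finset.insert_eq_self.2 hv]
        exact ih.trans (by
          gcongr
          omega)
      · rw [Finset.card_insert_of_notMem hv]
        have hpe : pe hk u w i ∉ (Finset.range i).image (pe hk u w) := by
          intro hmem
          simp only [Finset.mem_image, Finset.mem_range] at hmem
          obtain ⟨m, hm, hpm⟩ := hmem
          apply hv
          have hcompm : ∀ z, (z = (pe hk u w m).1 ∨ z = (pe hk u w m).2) →
              z ∈ (Finset.range (i+1)).image (wv hk u w) := by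
            intro z hz
            rcases pe_comp hk u w m with h | h <;> rw [h] at hz <;>
              simp only [Finset.mem_image, Finset.mem_range] <;>
              rcases hz with rfl | rfl
            · exact ⟨m, by omega, rfl⟩
            · exact ⟨m+1, by omega, rfl⟩
            · exact ⟨m+1, by omega, rfl⟩
            · exact ⟨m, by omega, rfl⟩
          rcases pe_comp hk u w i with h | h
          · exact hcompm _ (Or.inr (by rw [hpm, h]))
          · exact hcompm _ (Or.inl (by rw [hpm, h]))
        have hins : (Finset.range (i+1)).image (pe hk u w)
            = insert (pe hk u w i) ((Finset.range i).image (pe hk u w)) := by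
          rw [Finset.range_add_one, Finset.image_insert]
        rw [hins, Finset.card_insert_of_notMem hpe]
        omega

lemma walk_bound {n k : ℕ} (hk : 0 < k) (u w : Fin k → Fin n)
    (hdisj : ∀ j j', u j ≠ w j')
    (hocc : ∀ m ∈ Finset.range (2*k),
      2 ≤ ((Finset.range (2*k)).filter fun m' => pe hk u w m' = pe hk u w m).card) :
    (Finset.image u Finset.univ).card + (Finset.image w Finset.univ).card ≤ k + 1 := by
  classical
  -- edge count
  have hEcard : 2 * ((Finset.range (2*k)).image (pe hk u w)).card ≤ 2 * k := by
    have hsum := Finset.card_eq_sum_card_fiberwise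
      (f := pe hk u w) (s := Finset.range (2*k))
      (t := (Finset.range (2*k)).image (pe hk u w))
      (fun m hm => Finset.mem_image_of_mem _ hm)
    calc 2 * ((Finset.range (2*k)).image (pe hk u w)).card
        = ∑ _p ∈ (Finset.range (2*k)).image (pe hk u w), 2 := by
          rw [Finset.sum_const, smul_eq_mul, mul_comm]
      _ ≤ ∑ p ∈ (Finset.range (2*k)).image (pe hk u w),
            ((Finset.range (2*k)).filter fun m' => pe hk u w m' = p).card := by
          apply Finset.sum_le_sum
          intro p hp
          simp only [Finset.mem_image, Finset.mem_range] at hp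
          obtain ⟨m, hm, rfl⟩ := hp
          exact hocc m (Finset.mem_range.2 hm)
      _ = (Finset.range (2*k)).card := hsum.symm
      _ = 2 * k := Finset.card_range _
  -- vertex set identification
  have hVeq : (Finset.range (2*k)).image (wv hk u w)
      = Finset.image u Finset.univ ∪ Finset.image w Finset.univ := by
    apply Finset.Subset.antisymm
    · intro z hz
      simp only [Finset.mem_image, Finset.mem_range] at hz
      obtain ⟨m, hm, rfl⟩ := hz
      by_cases hd : 2 ∣ m
      · apply Finset.mem_union_left
        simp only [Finset.mem_image, Finset.mem_univ, true_and]
        exact ⟨⟨m / 2 % k, Nat.mod_lt _ hk⟩, by simp [wv, hd, uN]⟩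
      · apply Finset.mem_union_right
        simp only [Finset.mem_image, Finset.mem_univ, true_and]
        exact ⟨⟨m / 2 % k, Nat.mod_lt _ hk⟩, by simp [wv, hd, uN]⟩
    · intro z hz
      rcases Finset.mem_union.1 hz with hz | hz <;>
        simp only [Finset.mem_image, Finset.mem_univ, true_and] at hz <;>
        obtain ⟨j, rfl⟩ := hz <;>
        simp only [Finset.mem_image, Finset.mem_range]
      · refine ⟨2 * j.1, by omega, ?_⟩
        have hd : 2 ∣ 2 * j.1 := ⟨j.1, rfl⟩
        have : (2 * j.1) / 2 = j.1 := by omega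
        simp [wv, hd, this, uN, Nat.mod_eq_of_lt j.2, Fin.eta]
      · refine ⟨2 * j.1 + 1, by omega, ?_⟩
        have hd : ¬ (2 ∣ 2 * j.1 + 1) := by omega
        have : (2 * j.1 + 1) / 2 = j.1 := by omega
        simp [wv, hd, this, uN, Nat.mod_eq_of_lt j.2, Fin.eta]
  have hdisj' : Disjoint (Finset.image u Finset.univ) (Finset.image w Finset.univ) := by
    rw [Finset.disjoint_left]
    intro z hz hz'
    simp only [Finset.mem_image, Finset.mem_univ, true_and] at hz hz'
    obtain ⟨j, rfl⟩ := hz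
    obtain ⟨j', h⟩ := hz'
    exact hdisj j j' h.symm
  have hcardu : (Finset.image u Finset.univ).card + (Finset.image w Finset.univ).card
      = ((Finset.range (2*k)).image (wv hk u w)).card := by
    rw [hVeq, Finset.card_union_of_disjoint hdisj']
  have h2k : 2 * k = (2*k - 1) + 1 := by omega
  have hstep := walk_step hk u w (2*k - 1)
  rw [← h2k] at hstep
  have hmono : ((Finset.range (2*k-1)).image (pe hk u w)).card
      ≤ ((Finset.range (2*k)).image (pe hk u w)).card :=
    Finset.card_le_card (Finset.image_subset_image (Finset.range_subset_range.2 (by omega)))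
  omega


variable {n k : ℕ}

def fidx (u : Fin k → Fin n) (i : Fin k) : Fin k :=
  (Finset.univ.filter fun j => u j = u i).min' ⟨i, by simp⟩

lemma fidx_spec (u : Fin k → Fin n) (i : Fin k) : u (fidx u i) = u i := by
  have := Finset.min'_mem (Finset.univ.filter fun j => u j = u i) ⟨i, by simp⟩
  simpa [fidx] using this

lemma fidx_le (u : Fin k → Fin n) (i : Fin k) : fidx u i ≤ i :=
  Finset.min'_le _ _ (by simp)

lemma fidx_min (u : Fin k → Fin n) (i j : Fin k) (h : u j = u i) : fidx u i ≤ j :=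
  Finset.min'_le _ _ (by simp [h])

lemma fidx_fidx (u : Fin k → Fin n) (i : Fin k) : fidx u (fidx u i) = fidx u i :=
  le_antisymm (fidx_le _ _) (fidx_min u i _ (by rw [fidx_spec u (fidx u i), fidx_spec u i]))

lemma fidx_zero (u : Fin k → Fin n) (i : Fin k) (h : (i : ℕ) = 0) : fidx u i = i := by
  have h2 : (fidx u i : ℕ) ≤ (i : ℕ) := fidx_le u i
  apply Fin.ext
  omega

def Dc (u : Fin k → Fin n) (i : Fin k) : ℕ :=
  (Finset.univ.filter fun j => j < i ∧ fidx u j = j).card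

def dc (u : Fin k → Fin n) : ℕ :=
  (Finset.univ.filter fun j => fidx u j = j).card

lemma dc_le (u : Fin k → Fin n) : dc u ≤ k := by
  classical
  calc dc u ≤ (Finset.univ : Finset (Fin k)).card := Finset.card_le_card (Finset.filter_subset _ _)
    _ = k := by simp

lemma Dc_lt_dc (u : Fin k → Fin n) (i : Fin k) (h : fidx u i = i) : Dc u i < dc u := by
  classical
  apply Finset.card_lt_card
  constructor
  · intro j hj
    simp only [Finset.mem_filter] at hj ⊢
    exact ⟨hj.1, hj.2.2⟩
  · intro hsub
    have : i ∈ Finset.univ.filter fun j => fidx u j = j := by simp [h]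
    have := hsub this
    simp only [Finset.mem_filter] at this
    exact lt_irrefl i this.2.1

lemma Dc_strictMono (u : Fin k → Fin n) (i i' : Fin k)
    (hi : fidx u i = i) (hlt : i < i') : Dc u i < Dc u i' := by
  classical
  apply Finset.card_lt_card
  constructor
  · intro j hj
    simp only [Finset.mem_filter] at hj ⊢
    exact ⟨hj.1, hj.2.1.trans hlt, hj.2.2⟩
  · intro hsub
    have : i ∈ Finset.univ.filter fun j => j < i' ∧ fidx u j = j := by simp [hlt, hi]
    have := hsub this
    simp only [Finset.mem_filter] at this
    exact lt_irrefl i this.2.1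

lemma Dc_inj (u : Fin k → Fin n) (i i' : Fin k)
    (hi : fidx u i = i) (hi' : fidx u i' = i') (h : Dc u i = Dc u i') : i = i' := by
  rcases lt_trichotomy i i' with hl | he | hl
  · exact absurd h (Nat.ne_of_lt (Dc_strictMono u i i' hi hl))
  · exact he
  · exact absurd h.symm (Nat.ne_of_lt (Dc_strictMono u i' i hi' hl))

lemma dc_eq_card_image (u : Fin k → Fin n) :
    dc u = (Finset.image u Finset.univ).card := by
  classical
  rw [dc]
  rw [← Finset.card_image_of_injOn (f := u) (s := Finset.univ.filter fun j => fidx u j = j)]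
  · congr 1
    apply Finset.Subset.antisymm
    · exact Finset.image_subset_image (Finset.filter_subset _ _)
    · intro a ha
      simp only [Finset.mem_image, Finset.mem_univ, true_and] at ha
      obtain ⟨i, rfl⟩ := ha
      simp only [Finset.mem_image, Finset.mem_filter, Finset.mem_univ, true_and]
      exact ⟨fidx u i, fidx_fidx u i, fidx_spec u i⟩
  · intro a ha b hb hab
    simp only [Finset.coe_filter, Set.mem_setOf_eq, Finset.mem_univ, true_and] at ha hb
    have hab1 : fidx u a ≤ b := fidx_min u a b hab.symm
    have hab2 : fidx u b ≤ a := fidx_min u b a hab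
    rw [ha] at hab1
    rw [hb] at hab2
    exact le_antisymm hab1 hab2

noncomputable def Hfun (hn : 0 < n) (u w : Fin k → Fin n) (r : ℕ) : Fin n := by
  classical
  exact if h : ∃ i, fidx u i = i ∧ Dc u i = r then u h.choose
    else if h2 : ∃ i, fidx w i = i ∧ dc u + Dc w i = r then w h2.choose
    else ⟨0, hn⟩

lemma Hfun_u (hn : 0 < n) (u w : Fin k → Fin n) (i : Fin k) (hi : fidx u i = i) :
    Hfun hn u w (Dc u i) = u i := by
  classical
  have h : ∃ i', fidx u i' = i' ∧ Dc u i' = Dc u i := ⟨i, hi, rfl⟩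
  rw [Hfun, dif_pos h]
  have := h.choose_spec
  rw [Dc_inj u h.choose i this.1 hi this.2]

lemma Hfun_w (hn : 0 < n) (u w : Fin k → Fin n) (i : Fin k) (hi : fidx w i = i) :
    Hfun hn u w (dc u + Dc w i) = w i := by
  classical
  have hno : ¬ ∃ i', fidx u i' = i' ∧ Dc u i' = dc u + Dc w i := by
    rintro ⟨i', hi', hD⟩
    have := Dc_lt_dc u i' hi'
    omega
  have h2 : ∃ i', fidx w i' = i' ∧ dc u + Dc w i' = dc u + Dc w i := ⟨i, hi, rfl⟩
  rw [Hfun, dif_neg hno, dif_pos h2]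
  have := h2.choose_spec
  rw [Dc_inj w h2.choose i this.1 hi (by omega)]

lemma Dc_congr (u u' : Fin k → Fin n) (hf : ∀ i, fidx u i = fidx u' i) (i : Fin k) :
    Dc u i = Dc u' i := by
  unfold Dc
  congr 1
  apply Finset.filter_congr
  intro j _
  simp [hf j]

lemma dc_congr (u u' : Fin k → Fin n) (hf : ∀ i, fidx u i = fidx u' i) :
    dc u = dc u' := by
  unfold dc
  congr 1
  apply Finset.filter_congr
  intro j _
  simp [hf j]

lemma decode_u (hn : 0 < n) (u w u' w' : Fin k → Fin n)
    (hf : ∀ i, fidx u i = fidx u' i)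
    (hH : ∀ r, r ≤ k → Hfun hn u w r = Hfun hn u' w' r) : u = u' := by
  have hfresh : ∀ i, fidx u i = i → u i = u' i := by
    intro i hfr
    have hfr' : fidx u' i = i := by rw [← hf]; exact hfr
    have hDle : Dc u i ≤ k := le_of_lt (lt_of_lt_of_le (Dc_lt_dc u i hfr) (dc_le u))
    rw [← Hfun_u hn u w i hfr, ← Hfun_u hn u' w' i hfr', Dc_congr u u' hf, hH _ ?_]
    rw [← Dc_congr u u' hf]; exact hDle
  have key : ∀ m : ℕ, ∀ i : Fin k, (i : ℕ) ≤ m → u i = u' i := by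
    intro m
    induction m with
    | zero =>
        intro i h0
        apply hfresh
        exact fidx_zero u i (by omega)
    | succ m ih =>
        intro i hi
        by_cases hfr : fidx u i = i
        · exact hfresh i hfr
        · have hlt : (fidx u i : ℕ) < (i : ℕ) := by
            have := fidx_le u i
            have h2 : (fidx u i : ℕ) ≤ (i : ℕ) := this
            rcases lt_or_eq_of_le h2 with h | h
            · exact h
            · exact absurd (Fin.ext h) hfr
          have h1 : u i = u (fidx u i) := (fidx_spec u i).symm
          have h2 : u' i = u' (fidx u' i) := (fidx_spec u' i).symm
          rw [h1, h2, ← hf i]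
          exact ih (fidx u i) (by omega)
  funext i
  exact key i.1 i le_rfl

lemma decode_w (hn : 0 < n) (u w u' w' : Fin k → Fin n)
    (hbd : dc u + dc w ≤ k + 1)
    (hfu : ∀ i, fidx u i = fidx u' i)
    (hf : ∀ i, fidx w i = fidx w' i)
    (hH : ∀ r, r ≤ k → Hfun hn u w r = Hfun hn u' w' r) : w = w' := by
  have hfresh : ∀ i, fidx w i = i → w i = w' i := by
    intro i hfr
    have hfr' : fidx w' i = i := by rw [← hf]; exact hfr
    have hDlt : Dc w i < dc w := Dc_lt_dc w i hfr
    have hDle : dc u + Dc w i ≤ k := by omega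
    rw [← Hfun_w hn u w i hfr, ← Hfun_w hn u' w' i hfr', Dc_congr w w' hf,
      dc_congr u u' hfu, hH _ ?_]
    rw [← Dc_congr w w' hf, ← dc_congr u u' hfu]; exact hDle
  have key : ∀ m : ℕ, ∀ i : Fin k, (i : ℕ) ≤ m → w i = w' i := by
    intro m
    induction m with
    | zero =>
        intro i h0
        apply hfresh
        exact fidx_zero w i (by omega)
    | succ m ih =>
        intro i hi
        by_cases hfr : fidx w i = i
        · exact hfresh i hfr
        · have hlt : (fidx w i : ℕ) < (i : ℕ) := by
            have h2 : (fidx w i : ℕ) ≤ (i : ℕ) := fidx_le w i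
            rcases lt_or_eq_of_le h2 with h | h
            · exact h
            · exact absurd (Fin.ext h) hfr
          have h1 : w i = w (fidx w i) := (fidx_spec w i).symm
          have h2 : w' i = w' (fidx w' i) := (fidx_spec w' i).symm
          rw [h1, h2, ← hf i]
          exact ih (fidx w i) (by omega)
  funext i
  exact key i.1 i le_rfl

/-- The encoding of a pair of sequences. -/
noncomputable def encPair (hn : 0 < n) (u w : Fin k → Fin n) :
    (Fin (k-1) → Fin k) × (Fin (k-1) → Fin k) × (Fin (k+1) → Fin n) :=
  ⟨fun i => fidx u ⟨i.1 + 1, by omega⟩,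
   fun i => fidx w ⟨i.1 + 1, by omega⟩,
   fun r => Hfun hn u w r.1⟩

lemma fidx_eq_of_pat (u u' : Fin k → Fin n)
    (hp : (fun (i : Fin (k-1)) => fidx u ⟨i.1 + 1, by omega⟩)
        = (fun (i : Fin (k-1)) => fidx u' ⟨i.1 + 1, by omega⟩)) :
    ∀ i, fidx u i = fidx u' i := by
  intro i
  rcases Nat.eq_zero_or_pos i.1 with h0 | hpos
  · rw [fidx_zero u i h0, fidx_zero u' i h0]
  · have hi : i.1 - 1 < k - 1 := by omega
    have := congrFun hp ⟨i.1 - 1, hi⟩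
    simpa [Fin.ext_iff, (by omega : i.1 - 1 + 1 = i.1), Fin.eta] using this

lemma encPair_inj (hn : 0 < n) (u w u' w' : Fin k → Fin n)
    (hbd : dc u + dc w ≤ k + 1) (hbd' : dc u' + dc w' ≤ k + 1)
    (h : encPair hn u w = encPair hn u' w') : u = u' ∧ w = w' := by
  rw [encPair, encPair, Prod.ext_iff, Prod.ext_iff] at h
  have h1 := h.1
  have h2 := h.2.1
  have h3 := h.2.2
  have hfu := fidx_eq_of_pat u u' h1
  have hfw := fidx_eq_of_pat w w' h2
  have hH : ∀ r, r ≤ k → Hfun hn u w r = Hfun hn u' w' r := by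
    intro r hr
    exact congrFun h3 ⟨r, by omega⟩
  exact ⟨decode_u hn u w u' w' hfu hH, decode_w hn u w u' w' hbd hfu hfw hH⟩

open scoped Classical in
lemma count_good {n k : ℕ} (hn : 0 < n) {γ : Type*} [Fintype γ] [DecidableEq γ]
    (S : Finset γ) (m : {c : γ // c ∈ S} → γ) (hminj : Function.Injective m)
    (hmS : ∀ s, m s ∉ S) :
    (Finset.univ.filter fun v : γ → Fin k → Fin n =>
        ∀ s : {c : γ // c ∈ S}, dc (v s.1) + dc (v (m s)) ≤ k + 1).card
      ≤ (k ^ (k-1) * k ^ (k-1) * n ^ (k+1)) ^ S.card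
          * (n ^ k) ^ (Fintype.card γ - 2 * S.card) := by
  classical
  set M : Finset γ := Finset.univ.image m with hM
  have hMcard : M.card = S.card := by
    rw [hM, Finset.card_image_of_injective _ hminj, Finset.card_univ,
      Fintype.card_coe]
  have hMdisj : ∀ c ∈ M, c ∉ S := by
    intro c hc
    rw [hM] at hc
    simp only [Finset.mem_image, Finset.mem_univ, true_and] at hc
    obtain ⟨s, rfl⟩ := hc
    exact hmS s
  set R : Finset γ := (Finset.univ \ S) \ M with hR
  have hRcard : R.card = Fintype.card γ - 2 * S.card := by
    have hMsub : M ⊆ Finset.univ \ S := by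
      intro c hc
      rw [Finset.mem_sdiff]
      exact ⟨Finset.mem_univ _, hMdisj c hc⟩
    rw [hR, Finset.card_sdiff_of_subset hMsub, Finset.card_sdiff_of_subset (Finset.subset_univ S),
      Finset.card_univ, hMcard]
    omega
  have hle : (Finset.univ.filter fun v : γ → Fin k → Fin n =>
        ∀ s : {c : γ // c ∈ S}, dc (v s.1) + dc (v (m s)) ≤ k + 1).card
      ≤ (Finset.univ : Finset (({c : γ // c ∈ S} →
            (Fin (k-1) → Fin k) × (Fin (k-1) → Fin k) × (Fin (k+1) → Fin n))
          × ({c : γ // c ∈ R} → Fin k → Fin n))).card := by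
    apply Finset.card_le_card_of_injOn
      (fun v => (fun s => encPair hn (v s.1) (v (m s)), fun c => v c.1))
    · intro v _
      exact Finset.mem_univ _
    · intro v hv v' hv' heq
      simp only [Finset.mem_coe, Finset.mem_filter] at hv hv'
      have h1 := congrArg Prod.fst heq
      have h2 := congrArg Prod.snd heq
      simp only at h1 h2
      funext c
      by_cases hcS : c ∈ S
      · exact (encPair_inj hn _ _ _ _ (hv.2 ⟨c, hcS⟩) (hv'.2 ⟨c, hcS⟩)
          (congrFun h1 ⟨c, hcS⟩)).1
      · by_cases hcM : c ∈ M
        · rw [hM] at hcM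
          simp only [Finset.mem_image, Finset.mem_univ, true_and] at hcM
          obtain ⟨s, rfl⟩ := hcM
          exact (encPair_inj hn _ _ _ _ (hv.2 s) (hv'.2 s) (congrFun h1 s)).2
        · have hcR : c ∈ R := by
            rw [hR]
            simp only [Finset.mem_sdiff, Finset.mem_univ, true_and]
            exact ⟨hcS, hcM⟩
          exact congrFun h2 ⟨c, hcR⟩
  refine hle.trans (le_of_eq ?_)
  rw [Finset.card_univ, Fintype.card_prod, Fintype.card_fun, Fintype.card_fun,
    Fintype.card_prod, Fintype.card_prod, Fintype.card_fun, Fintype.card_fun,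
    Fintype.card_fun, Fintype.card_fin, Fintype.card_fin, Fintype.card_fin,
    Fintype.card_coe, Fintype.card_coe, hRcard, Fintype.card_fin]
  ring

open scoped Classical in
lemma hallX {x y q : ℕ} (E : Finset (Fin x × Fin y)) (S : Finset (Fin x ⊕ Fin y))
    (hcov : IsVertexCover E S) (hcard : S.card = q)
    (hmin : ∀ S', IsVertexCover E S' → q ≤ S'.card)
    (T : Finset {i : Fin x // Sum.inl i ∈ S}) :
    T.card ≤ (T.biUnion fun i =>
      Finset.univ.filter fun j => (i.1, j) ∈ E ∧ Sum.inr j ∉ S).card := by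
  by_contra hlt
  push_neg at hlt
  set N := T.biUnion fun i =>
      Finset.univ.filter fun j => (i.1, j) ∈ E ∧ Sum.inr j ∉ S with hN
  set TI : Finset (Fin x ⊕ Fin y) := T.image fun i => Sum.inl i.1 with hTI
  have hTIcard : TI.card = T.card := by
    rw [hTI]
    apply Finset.card_image_of_injective
    intro a b hab
    exact Subtype.ext (Sum.inl.inj hab)
  have hTIsub : TI ⊆ S := by
    intro c hc
    rw [hTI] at hc
    simp only [Finset.mem_image] at hc
    obtain ⟨i, _, rfl⟩ := hc
    exact i.2
  set S' : Finset (Fin x ⊕ Fin y) := (S \ TI) ∪ N.image Sum.inr with hS'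
  have hcov' : IsVertexCover E S' := by
    intro e he
    rcases hcov e he with h | h
    · by_cases hT : ∃ i ∈ T, i.1 = e.1
      · obtain ⟨i, hiT, hie⟩ := hT
        by_cases hy : Sum.inr e.2 ∈ S
        · right
          rw [hS']
          apply Finset.mem_union_left
          rw [Finset.mem_sdiff]
          refine ⟨hy, ?_⟩
          rw [hTI]
          simp only [Finset.mem_image]
          rintro ⟨i', -, h'⟩
          exact Sum.inl_ne_inr h'
        · right
          rw [hS']
          apply Finset.mem_union_right
          simp only [Finset.mem_image]
          refine ⟨e.2, ?_, rfl⟩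
          rw [hN]
          simp only [Finset.mem_biUnion]
          exact ⟨i, hiT, by simp [hie, hy, he]⟩
      · left
        rw [hS']
        apply Finset.mem_union_left
        rw [Finset.mem_sdiff]
        refine ⟨h, ?_⟩
        rw [hTI]
        simp only [Finset.mem_image]
        rintro ⟨i', hi', h'⟩
        exact hT ⟨i', hi', Sum.inl.inj h'⟩
    · right
      rw [hS']
      apply Finset.mem_union_left
      rw [Finset.mem_sdiff]
      refine ⟨h, ?_⟩
      rw [hTI]
      simp only [Finset.mem_image]
      rintro ⟨i', -, h'⟩
      exact Sum.inl_ne_inr h'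
  have hcard' : S'.card < q := by
    calc S'.card ≤ (S \ TI).card + (N.image Sum.inr).card := Finset.card_union_le _ _
      _ ≤ (S.card - T.card) + N.card := by
          gcongr
          · rw [Finset.card_sdiff_of_subset hTIsub, hTIcard]
          · exact Finset.card_image_le
      _ < q := by
          have hTle : T.card ≤ S.card := by
            rw [← hTIcard]
            exact Finset.card_le_card hTIsub
          have hTpos : 0 < T.card := by
            by_contra h0
            push_neg at h0
            omega
          omega
  exact absurd (hmin S' hcov') (by omega)

open scoped Classical in
lemma hallY {x y q : ℕ} (E : Finset (Fin x × Fin y)) (S : Finset (Fin x ⊕ Fin y))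
    (hcov : IsVertexCover E S) (hcard : S.card = q)
    (hmin : ∀ S', IsVertexCover E S' → q ≤ S'.card)
    (T : Finset {j : Fin y // Sum.inr j ∈ S}) :
    T.card ≤ (T.biUnion fun j =>
      Finset.univ.filter fun i => (i, j.1) ∈ E ∧ Sum.inl i ∉ S).card := by
  by_contra hlt
  push_neg at hlt
  set N := T.biUnion fun j =>
      Finset.univ.filter fun i => (i, j.1) ∈ E ∧ Sum.inl i ∉ S with hN
  set TI : Finset (Fin x ⊕ Fin y) := T.image fun j => Sum.inr j.1 with hTI
  have hTIcard : TI.card = T.card := by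
    rw [hTI]
    apply Finset.card_image_of_injective
    intro a b hab
    exact Subtype.ext (Sum.inr.inj hab)
  have hTIsub : TI ⊆ S := by
    intro c hc
    rw [hTI] at hc
    simp only [Finset.mem_image] at hc
    obtain ⟨j, _, rfl⟩ := hc
    exact j.2
  set S' : Finset (Fin x ⊕ Fin y) := (S \ TI) ∪ N.image Sum.inl with hS'
  have hcov' : IsVertexCover E S' := by
    intro e he
    rcases hcov e he with h | h
    · left
      rw [hS']
      apply Finset.mem_union_left
      rw [Finset.mem_sdiff]
      refine ⟨h, ?_⟩
      rw [hTI]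
      simp only [Finset.mem_image]
      rintro ⟨j', -, h'⟩
      exact Sum.inr_ne_inl h'
    · by_cases hT : ∃ j ∈ T, j.1 = e.2
      · obtain ⟨j, hjT, hje⟩ := hT
        by_cases hx : Sum.inl e.1 ∈ S
        · left
          rw [hS']
          apply Finset.mem_union_left
          rw [Finset.mem_sdiff]
          refine ⟨hx, ?_⟩
          rw [hTI]
          simp only [Finset.mem_image]
          rintro ⟨j', -, h'⟩
          exact Sum.inr_ne_inl h'
        · left
          rw [hS']
          apply Finset.mem_union_right
          simp only [Finset.mem_image]
          refine ⟨e.1, ?_, rfl⟩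
          rw [hN]
          simp only [Finset.mem_biUnion]
          exact ⟨j, hjT, by simp [hje, hx, he]⟩
      · right
        rw [hS']
        apply Finset.mem_union_left
        rw [Finset.mem_sdiff]
        refine ⟨h, ?_⟩
        rw [hTI]
        simp only [Finset.mem_image]
        rintro ⟨j', hj', h'⟩
        exact hT ⟨j', hj', Sum.inr.inj h'⟩
  have hcard' : S'.card < q := by
    calc S'.card ≤ (S \ TI).card + (N.image Sum.inl).card := Finset.card_union_le _ _
      _ ≤ (S.card - T.card) + N.card := by
          gcongr
          · rw [Finset.card_sdiff_of_subset hTIsub, hTIcard]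
          · exact Finset.card_image_le
      _ < q := by
          have hTle : T.card ≤ S.card := by
            rw [← hTIcard]
            exact Finset.card_le_card hTIsub
          have hTpos : 0 < T.card := by
            by_contra h0
            push_neg at h0
            omega
          omega
  exact absurd (hmin S' hcov') (by omega)

open scoped Classical in
lemma exists_matching {x y q : ℕ} (E : Finset (Fin x × Fin y))
    (hq : IsLeast {m | ∃ S : Finset (Fin x ⊕ Fin y), IsVertexCover E S ∧ S.card = m} q) :
    ∃ (S : Finset (Fin x ⊕ Fin y)) (m : {c : Fin x ⊕ Fin y // c ∈ S} → Fin x ⊕ Fin y),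
      IsVertexCover E S ∧ S.card = q ∧ Function.Injective m ∧
      (∀ s, m s ∉ S) ∧
      (∀ s : {c : Fin x ⊕ Fin y // c ∈ S}, ∃ e ∈ E,
        (s.1 = Sum.inl e.1 ∧ m s = Sum.inr e.2) ∨ (s.1 = Sum.inr e.2 ∧ m s = Sum.inl e.1)) := by
  obtain ⟨S, hcov, hcard⟩ := hq.1
  have hmin : ∀ S', IsVertexCover E S' → q ≤ S'.card := fun S' h => hq.2 ⟨S', h, rfl⟩
  obtain ⟨fX, hfXinj, hfXmem⟩ := (Finset.all_card_le_biUnion_card_iff_exists_injective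
    (fun (i : {i : Fin x // Sum.inl i ∈ S}) =>
      Finset.univ.filter fun j => (i.1, j) ∈ E ∧ Sum.inr j ∉ S)).1
    (hallX E S hcov hcard hmin)
  obtain ⟨fY, hfYinj, hfYmem⟩ := (Finset.all_card_le_biUnion_card_iff_exists_injective
    (fun (j : {j : Fin y // Sum.inr j ∈ S}) =>
      Finset.univ.filter fun i => (i, j.1) ∈ E ∧ Sum.inl i ∉ S)).1
    (hallY E S hcov hcard hmin)
  refine ⟨S, fun s => (Sum.rec (motive := fun c => c ∈ S → Fin x ⊕ Fin y)
      (fun i h => Sum.inr (fX ⟨i, h⟩)) (fun j h => Sum.inl (fY ⟨j, h⟩)) s.1) s.2,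
    hcov, hcard, ?_, ?_, ?_⟩
  · rintro ⟨c, hc⟩ ⟨c', hc'⟩ hss
    cases c <;> cases c' <;> simp only [] at hss
    · exact Subtype.ext (congrArg Sum.inl (congrArg Subtype.val
        (hfXinj (Sum.inr.inj hss)) : _))
    · exact absurd hss (by simp)
    · exact absurd hss (by simp)
    · exact Subtype.ext (congrArg Sum.inr (congrArg Subtype.val
        (hfYinj (Sum.inl.inj hss)) : _))
  · rintro ⟨c, hc⟩
    cases c
    · have := hfXmem ⟨_, hc⟩
      simp only [Finset.mem_filter, Finset.mem_univ, true_and] at this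
      exact this.2
    · have := hfYmem ⟨_, hc⟩
      simp only [Finset.mem_filter, Finset.mem_univ, true_and] at this
      exact this.2
  · rintro ⟨c, hc⟩
    cases c with
    | inl i =>
      have := hfXmem ⟨i, hc⟩
      simp only [Finset.mem_filter, Finset.mem_univ, true_and] at this
      exact ⟨(i, fX ⟨i, hc⟩), this.1, Or.inl ⟨rfl, rfl⟩⟩
    | inr j =>
      have := hfYmem ⟨j, hc⟩
      simp only [Finset.mem_filter, Finset.mem_univ, true_and] at this
      exact ⟨(fY ⟨j, hc⟩, j), this.1, Or.inr ⟨rfl, rfl⟩⟩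


def eidx (m : ℕ) : ℕ := if 2 ∣ m then m / 2 else m / 2 + 1

lemma pe_eq {n k : ℕ} (hk : 0 < k) (u w : Fin k → Fin n) (m : ℕ) :
    pe hk u w m = (uN hk u (eidx m), uN hk w (m / 2)) := by
  unfold pe eidx
  split <;> rfl

lemma uN_fin {n k : ℕ} (hk : 0 < k) (f : Fin k → Fin n) (j : Fin k) :
    uN hk f j.1 = f j := by
  rw [uN]
  congr 1
  exact Fin.ext (Nat.mod_eq_of_lt j.2)

lemma uN_succ {n k : ℕ} (hk : 0 < k) (f : Fin k → Fin n) (j : Fin k) :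
    uN hk f (j.1 + 1) = f (cyc j) := by
  rw [uN]
  congr 1

open scoped Classical in
lemma main_good {n x y k : ℕ} (hk : 0 < k)
    (E : Finset (Fin x × Fin y)) (P : (Fin x ⊕ Fin y) → Finset (Fin n))
    (hPdisj : ∀ a b, a ≠ b → Disjoint (P a) (P b))
    (A : Fin k → SubsetsCard n x) (B : Fin k → SubsetsCard n y)
    (hEx : Ex (fun g => ∏ j : Fin k,
        RHpart E P g (A j) (B j) * RHpart E P g (A (cyc j)) (B j)) ≠ 0) :
    ∀ e ∈ E, dc (fun j => tup (A j) e.1) + dc (fun j => tup (B j) e.2) ≤ k + 1 := by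
  intro e he
  have hsum : (∑ g : Sym2 (Fin n) → Bool, ∏ j : Fin k,
      RHpart E P g (A j) (B j) * RHpart E P g (A (cyc j)) (B j)) ≠ 0 := by
    intro h
    apply hEx
    rw [Ex, h, zero_div]
  -- all conditions hold
  have hcond : ∀ j : Fin k,
      (Disjoint (A j).1 (B j).1 ∧ (∀ i, tup (A j) i ∈ P (Sum.inl i))
        ∧ (∀ j', tup (B j) j' ∈ P (Sum.inr j'))) ∧
      (Disjoint (A (cyc j)).1 (B j).1 ∧ (∀ i, tup (A (cyc j)) i ∈ P (Sum.inl i))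
        ∧ (∀ j', tup (B j) j' ∈ P (Sum.inr j'))) := by
    intro j
    by_contra hc
    apply hsum
    apply Finset.sum_eq_zero
    intro g _
    apply Finset.prod_eq_zero (Finset.mem_univ j)
    rcases not_and_or.1 hc with h | h
    · have : RHpart E P g (A j) (B j) = 0 := by
        simp only [RHpart, Matrix.of_apply]
        rw [if_neg h]
      rw [this, zero_mul]
    · have : RHpart E P g (A (cyc j)) (B j) = 0 := by
        simp only [RHpart, Matrix.of_apply]
        rw [if_neg h]
      rw [this, mul_zero]
  have hmemA : ∀ (j : Fin k) i, tup (A j) i ∈ P (Sum.inl i) := fun j i => (hcond j).1.2.1 i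
  have hmemB : ∀ (j : Fin k) j', tup (B j) j' ∈ P (Sum.inr j') := fun j j' => (hcond j).1.2.2 j'
  -- the edge-slot map
  set em : ℕ × (Fin x × Fin y) → Sym2 (Fin n) := fun p =>
    s(uN hk (fun j => tup (A j) p.2.1) (eidx p.1), uN hk (fun j => tup (B j) p.2.2) (p.1 / 2))
    with hem
  set F : Finset (ℕ × (Fin x × Fin y)) := (Finset.range (2*k)) ×ˢ E with hF
  -- the product identity
  have hprod : ∀ g : Sym2 (Fin n) → Bool,
      (∏ j : Fin k, RHpart E P g (A j) (B j) * RHpart E P g (A (cyc j)) (B j))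
        = ∏ p ∈ F, sgn (g (em p)) := by
    intro g
    have heven : ∀ (jn : ℕ), eidx (2 * jn) = jn ∧ (2 * jn) / 2 = jn := by
      intro jn
      constructor
      · rw [eidx, if_pos ⟨jn, rfl⟩]
        omega
      · omega
    have hodd : ∀ (jn : ℕ), eidx (2 * jn + 1) = jn + 1 ∧ (2 * jn + 1) / 2 = jn := by
      intro jn
      constructor
      · rw [eidx, if_neg (by omega)]
        omega
      · omega
    have step1 : ∀ j : Fin k,
        RHpart E P g (A j) (B j) * RHpart E P g (A (cyc j)) (B j)
          = (∏ e' ∈ E, sgn (g (em (2 * j.1, e'))))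
            * (∏ e' ∈ E, sgn (g (em (2 * j.1 + 1, e')))) := by
      intro j
      have e1 : RHpart E P g (A j) (B j) = ∏ e' ∈ E, sgn (g (em (2 * j.1, e'))) := by
        simp only [RHpart, Matrix.of_apply]
        rw [if_pos (hcond j).1]
        simp only [RH, Matrix.of_apply]
        rw [if_pos (hcond j).1.1]
        apply Finset.prod_congr rfl
        intro e' _
        congr 1
        rw [hem]
        simp only [(heven j.1).1, (heven j.1).2]
        rw [uN_fin hk (fun j' => tup (A j') e'.1) j, uN_fin hk (fun j' => tup (B j') e'.2) j]
      have e2 : RHpart E P g (A (cyc j)) (B j)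
          = ∏ e' ∈ E, sgn (g (em (2 * j.1 + 1, e'))) := by
        simp only [RHpart, Matrix.of_apply]
        rw [if_pos (hcond j).2]
        simp only [RH, Matrix.of_apply]
        rw [if_pos (hcond j).2.1]
        apply Finset.prod_congr rfl
        intro e' _
        congr 1
        rw [hem]
        simp only [(hodd j.1).1, (hodd j.1).2]
        rw [uN_succ hk (fun j' => tup (A j') e'.1) j, uN_fin hk (fun j' => tup (B j') e'.2) j]
      rw [e1, e2]
    calc (∏ j : Fin k, RHpart E P g (A j) (B j) * RHpart E P g (A (cyc j)) (B j))
        = ∏ j : Fin k, ((fun mn => (∏ e' ∈ E, sgn (g (em (2 * mn, e'))))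
            * (∏ e' ∈ E, sgn (g (em (2 * mn + 1, e'))))) (j : ℕ)) :=
          Finset.prod_congr rfl (fun j _ => step1 j)
      _ = ∏ jn ∈ Finset.range k, ((∏ e' ∈ E, sgn (g (em (2 * jn, e'))))
            * (∏ e' ∈ E, sgn (g (em (2 * jn + 1, e'))))) :=
          Fin.prod_univ_eq_prod_range (fun mn => (∏ e' ∈ E, sgn (g (em (2 * mn, e'))))
            * (∏ e' ∈ E, sgn (g (em (2 * mn + 1, e'))))) k
      _ = ∏ m ∈ Finset.range (2 * k), ∏ e' ∈ E, sgn (g (em (m, e'))) :=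
          (prod_range_two_mul k (fun m => ∏ e' ∈ E, sgn (g (em (m, e'))))).symm
      _ = ∏ p ∈ F, sgn (g (em p)) := by
          rw [hF, Finset.prod_product]
  -- parity
  have hsum2 : (∑ g : Sym2 (Fin n) → Bool, ∏ p ∈ F, sgn (g (em p))) ≠ 0 := by
    intro h
    apply hsum
    rw [← h]
    exact Finset.sum_congr rfl fun g _ => hprod g
  have hpar := parity_of_sum_ne F em hsum2
  -- the walk for edge e
  set u : Fin k → Fin n := fun j => tup (A j) e.1 with hu
  set w : Fin k → Fin n := fun j => tup (B j) e.2 with hw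
  have hpe : ∀ m : ℕ, em (m, e) = s((pe hk u w m).1, (pe hk u w m).2) := by
    intro m
    rw [pe_eq hk u w m]
  have hdisjuw : ∀ j j', u j ≠ w j' := by
    intro j j' hco
    have h1 : u j ∈ P (Sum.inl e.1) := hmemA j e.1
    have h2 : u j ∈ P (Sum.inr e.2) := hco ▸ hmemB j' e.2
    exact Finset.disjoint_left.1 (hPdisj _ _ (by simp)) h1 h2
  -- membership of pe components
  have hpeu : ∀ m : ℕ, ∀ e' : Fin x × Fin y,
      uN hk (fun j => tup (A j) e'.1) (eidx m) ∈ P (Sum.inl e'.1) := by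
    intro m e'
    rw [uN]
    exact hmemA _ _
  have hpew : ∀ m : ℕ, ∀ e' : Fin x × Fin y,
      uN hk (fun j => tup (B j) e'.2) (m / 2) ∈ P (Sum.inr e'.2) := by
    intro m e'
    rw [uN]
    exact hmemB _ _
  have hocc : ∀ m₀ ∈ Finset.range (2*k),
      2 ≤ ((Finset.range (2*k)).filter fun m' => pe hk u w m' = pe hk u w m₀).card := by
    intro m₀ hm₀
    have himg : F.filter (fun p => em p = em (m₀, e))
        = ((Finset.range (2*k)).filter fun m' =>
            pe hk u w m' = pe hk u w m₀).image (fun m' => (m', e)) := by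
      ext ⟨m', e'⟩
      simp only [Finset.mem_filter, Finset.mem_image, hF, Finset.mem_product]
      constructor
      · rintro ⟨⟨hm', he'⟩, heq⟩
        -- identify e' = e and pe equality
        have hsym : s(uN hk (fun j => tup (A j) e'.1) (eidx m'),
              uN hk (fun j => tup (B j) e'.2) (m' / 2))
            = s(uN hk (fun j => tup (A j) e.1) (eidx m₀),
              uN hk (fun j => tup (B j) e.2) (m₀ / 2)) := heq
        rcases Sym2.eq_iff.1 hsym with ⟨ha, hb⟩ | ⟨ha, hb⟩
        · have he1 : e'.1 = e.1 := by
            by_contra hne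
            exact Finset.disjoint_left.1
              (hPdisj (Sum.inl e'.1) (Sum.inl e.1) (by simp [hne]))
              (hpeu m' e') (ha ▸ hpeu m₀ e)
          have he2 : e'.2 = e.2 := by
            by_contra hne
            exact Finset.disjoint_left.1
              (hPdisj (Sum.inr e'.2) (Sum.inr e.2) (by simp [hne]))
              (hpew m' e') (hb ▸ hpew m₀ e)
          have hee : e' = e := Prod.ext he1 he2
          subst hee
          refine ⟨m', ⟨hm', ?_⟩, rfl⟩
          rw [pe_eq, pe_eq]
          exact Prod.ext (by exact ha) (by exact hb)
        · exfalso
          exact Finset.disjoint_left.1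
            (hPdisj (Sum.inl e'.1) (Sum.inr e.2) (by simp))
            (hpeu m' e') (ha ▸ hpew m₀ e)
      · rintro ⟨m'', ⟨hm'', hpem⟩, hmk⟩
        obtain ⟨rfl, rfl⟩ : m'' = m' ∧ e = e' := by
          constructor
          · exact congrArg Prod.fst hmk
          · exact congrArg Prod.snd hmk
        refine ⟨⟨hm'', he⟩, ?_⟩
        rw [hpe, hpe, hpem]
    have hcards : (F.filter (fun p => em p = em (m₀, e))).card
        = ((Finset.range (2*k)).filter fun m' => pe hk u w m' = pe hk u w m₀).card := by
      rw [himg]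
      apply Finset.card_image_of_injective
      intro a b hab
      exact congrArg Prod.fst hab
    have heven := hpar (em (m₀, e))
    rw [hcards] at heven
    have hmem : m₀ ∈ (Finset.range (2*k)).filter fun m' => pe hk u w m' = pe hk u w m₀ := by
      simp [hm₀]
    have hpos : 0 < ((Finset.range (2*k)).filter
        fun m' => pe hk u w m' = pe hk u w m₀).card := Finset.card_pos.2 ⟨m₀, hmem⟩
    obtain ⟨c, hc⟩ := heven
    omega
  have hbound := walk_bound hk u w hdisjuw hocc
  rw [dc_eq_card_image, dc_eq_card_image]
  exact hbound

open scoped Classical in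
theorem stmt11 (n x y q k : ℕ) (hn : 1 ≤ n) (hk : 1 ≤ k)
    (E : Finset (Fin x × Fin y))
    (hq : IsLeast {m | ∃ S : Finset (Fin x ⊕ Fin y), IsVertexCover E S ∧ S.card = m} q)
    (P : (Fin x ⊕ Fin y) → Finset (Fin n))
    (hPdisj : ∀ a b, a ≠ b → Disjoint (P a) (P b))
    (hPcov : ∀ v : Fin n, ∃ a, v ∈ P a) :
    (Finset.univ.filter fun AB : (Fin k → SubsetsCard n x) × (Fin k → SubsetsCard n y) =>
        Ex (fun g => ∏ j : Fin k,
            RHpart E P g (AB.1 j) (AB.2 j) * RHpart E P g (AB.1 (cyc j)) (AB.2 j)) ≠ 0).card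
      ≤ ((x + y) * k) ^ (2 * (k - 1) * q) * n ^ ((x + y - q) * k + q) := by
  classical
  have hn0 : 0 < n := hn
  have hk0 : 0 < k := hk
  obtain ⟨S, m, hcov, hScard, hminj, hmS, hmedge⟩ := exists_matching E hq
  -- grid map
  set Φ : (Fin k → SubsetsCard n x) × (Fin k → SubsetsCard n y)
      → ((Fin x ⊕ Fin y) → Fin k → Fin n) := fun AB c =>
    match c with
    | Sum.inl i => fun j => tup (AB.1 j) i
    | Sum.inr j' => fun j => tup (AB.2 j) j'
    with hΦ
  set GoodF := Finset.univ.filter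
    (fun v : (Fin x ⊕ Fin y) → Fin k → Fin n =>
      ∀ s : {c : Fin x ⊕ Fin y // c ∈ S}, dc (v s.1) + dc (v (m s)) ≤ k + 1) with hGoodF
  have step1 : (Finset.univ.filter fun AB :
        (Fin k → SubsetsCard n x) × (Fin k → SubsetsCard n y) =>
        Ex (fun g => ∏ j : Fin k,
            RHpart E P g (AB.1 j) (AB.2 j) * RHpart E P g (AB.1 (cyc j)) (AB.2 j)) ≠ 0).card
      ≤ GoodF.card := by
    apply Finset.card_le_card_of_injOn Φ
    · intro AB hAB
      rw [Finset.mem_coe, Finset.mem_filter] at hAB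
      rw [Finset.mem_coe, hGoodF, Finset.mem_filter]
      refine ⟨Finset.mem_univ _, ?_⟩
      intro s
      obtain ⟨e, he, hor⟩ := hmedge s
      have hg := main_good hk0 E P hPdisj AB.1 AB.2 hAB.2 e he
      rcases hor with ⟨h1, h2⟩ | ⟨h1, h2⟩
      · rw [h1, h2]
        exact hg
      · rw [h1, h2, Nat.add_comm]
        exact hg
    · intro AB _ AB' _ h
      have hA : ∀ j, AB.1 j = AB'.1 j := by
        intro j
        apply Subtype.ext
        rw [← tup_image (AB.1 j), ← tup_image (AB'.1 j)]
        congr 1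
        funext i
        exact congrFun (congrFun h (Sum.inl i)) j
      have hB : ∀ j, AB.2 j = AB'.2 j := by
        intro j
        apply Subtype.ext
        rw [← tup_image (AB.2 j), ← tup_image (AB'.2 j)]
        congr 1
        funext j'
        exact congrFun (congrFun h (Sum.inr j')) j
      exact Prod.ext (funext hA) (funext hB)
  have step2 : GoodF.card
      ≤ (k ^ (k-1) * k ^ (k-1) * n ^ (k+1)) ^ S.card
        * (n ^ k) ^ (Fintype.card (Fin x ⊕ Fin y) - 2 * S.card) :=
    count_good hn0 S m hminj hmS
  have hcardsum : Fintype.card (Fin x ⊕ Fin y) = x + y := by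
    simp [Fintype.card_sum]
  -- 2q ≤ x + y
  have h2q : 2 * q ≤ x + y := by
    have hMcard : (Finset.univ.image m).card = q := by
      rw [Finset.card_image_of_injective _ hminj, Finset.card_univ,
        Fintype.card_coe, hScard]
    have hdSM : Disjoint S (Finset.univ.image m) := by
      rw [Finset.disjoint_right]
      intro c hc
      simp only [Finset.mem_image, Finset.mem_univ, true_and] at hc
      obtain ⟨s, rfl⟩ := hc
      exact hmS s
    have := Finset.card_le_univ (S ∪ Finset.univ.image m)
    rw [Finset.card_union_of_disjoint hdSM, hScard, hMcard] at this
    rw [hcardsum] at this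
    omega
  -- arithmetic
  refine (step1.trans step2).trans ?_
  rw [hScard, hcardsum]
  obtain ⟨b, hb⟩ : ∃ b, x + y = 2*q + b := ⟨x + y - 2*q, by omega⟩
  have e1 : x + y - 2*q = b := by omega
  have e2 : x + y - q = q + b := by omega
  rw [e1, e2]
  have lhs_eq : (k ^ (k-1) * k ^ (k-1) * n ^ (k+1)) ^ q * (n ^ k) ^ b
      = k ^ (2 * (k-1) * q) * n ^ ((q + b) * k + q) := by
    have ek : (k-1) * q + (k-1) * q = 2 * (k-1) * q := by ring
    have en : (k+1) * q + k * b = (q + b) * k + q := by ring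
    rw [mul_pow, mul_pow, ← pow_mul, ← pow_mul, ← pow_mul,
      ← ek, ← en, pow_add, pow_add]
    ring
  rw [lhs_eq]
  by_cases hq0 : 2 * (k-1) * q = 0
  · simp [hq0]
  · have hq1 : 1 ≤ q := by
      rcases Nat.eq_zero_or_pos q with h | h
      · exfalso; apply hq0; rw [h]; ring
      · exact h
    have hxy : 1 ≤ x + y := by omega
    exact Nat.mul_le_mul (Nat.pow_le_pow_left (Nat.le_mul_of_pos_left k (by omega)) _) le_rfl
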